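/- Let f(t) = c_d + c_a·(e^{it}-1)/(it) + c_s·e^{it/2}·∏_{k=1}^{∞} cos(t/3^k), where c_d > c_s > 0, c_a ≥ 0, and c_d + c_a + c_s = 1. Then f(t) ≠ 0 for every t ∈ ℝ. -/

import Mathlib

open Complex

lemma prodbound10 (t : ℝ) : |∏' k : ℕ, Real.cos (t / 3 ^ (k + 1))| ≤ 1 := by
  by_cases h : Multipliable (fun k : ℕ => Real.cos (t / 3 ^ (k + 1)))
  · refine le_of_tendsto' (h.hasProd.abs) ?_
    intro s
    exact Finset.prod_le_one (fun _ _ => abs_nonneg _) (fun k _ => Real.abs_cos_le_one _)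
  · rw [tprod_eq_one_of_not_multipliable h]; norm_num

theorem stmt10 (cd ca cs : ℝ) (hcs : 0 < cs) (hdom : cs < cd) (hca : 0 ≤ ca)
    (hsum : cd + ca + cs = 1) :
    ∀ t : ℝ,
      (cd : ℂ) + ca * ((Complex.exp ((t : ℂ) * Complex.I) - 1) / ((t : ℂ) * Complex.I))
        + cs * Complex.exp ((t : ℂ) * Complex.I / 2) *
            ((∏' k : ℕ, Real.cos (t / 3 ^ (k + 1)) : ℝ) : ℂ) ≠ 0 := by
  intro t H
  set P : ℝ := ∏' k : ℕ, Real.cos (t / 3 ^ (k + 1)) with hPdef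
  have hPb : |P| ≤ 1 := prodbound10 t
  rw [abs_le] at hPb
  by_cases ht : t = 0
  · subst ht
    simp at H
    have hre : cd + cs * P = 0 := by exact_mod_cast congrArg Complex.re H
    nlinarith [hPb.1, hPb.2]
  · have h0 : (t : ℂ) * Complex.I ≠ 0 := by
      simp [ht, Complex.I_ne_zero]
    have H2 : (cd : ℂ) * (t * Complex.I) + ca * (Complex.exp (t * Complex.I) - 1)
        + cs * Complex.exp ((t : ℂ) * Complex.I / 2) * P * (t * Complex.I) = 0 := by
      have := congrArg (· * ((t : ℂ) * Complex.I)) H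
      simp only [zero_mul] at this
      field_simp at this
      have hinv : (t : ℂ) * (t : ℂ)⁻¹ = 1 := mul_inv_cancel₀ (by exact_mod_cast ht)
      linear_combination this + (ca : ℂ) * (1 - Complex.exp ((t : ℂ) * Complex.I)) * hinv
    have hre := congrArg Complex.re H2
    have him := congrArg Complex.im H2
    simp [Complex.exp_re, Complex.exp_im, Complex.add_re, Complex.add_im,
      Complex.mul_re, Complex.mul_im, Complex.div_re, Complex.div_im] at hre him
    have hpy := Real.sin_sq_add_cos_sq (t / 2)
    have hc2 : Real.cos t = 1 - 2 * Real.sin (t / 2) ^ 2 := by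
      have h := Real.cos_two_mul (t / 2)
      rw [show 2 * (t / 2) = t by ring] at h
      nlinarith [h, hpy]
    have hs2 : Real.sin t = 2 * Real.sin (t / 2) * Real.cos (t / 2) := by
      have h := Real.sin_two_mul (t / 2)
      rw [show 2 * (t / 2) = t by ring] at h
      linarith
    have key : cd * t * Real.sin (t / 2) = 0 := by
      linear_combination Real.sin (t / 2) * him + Real.cos (t / 2) * hre
        - ca * Real.sin (t / 2) * hs2 - ca * Real.cos (t / 2) * hc2
    have hs0 : Real.sin (t / 2) = 0 := by
      rcases mul_eq_zero.1 key with h | h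
      · rcases mul_eq_zero.1 h with h' | h'
        · linarith
        · exact absurd h' ht
      · exact h
    have hcsq : Real.cos (t / 2) ^ 2 = 1 := by nlinarith [hpy, hs0]
    have hmain : cd + cs * Real.cos (t / 2) * P = 0 := by
      have h2 : t * (cd + cs * Real.cos (t / 2) * P) = 0 := by
        linear_combination him - ca * hs2 - 2 * ca * Real.cos (t / 2) * hs0
      exact (mul_eq_zero.1 h2).resolve_left ht
    have hP2 : P ^ 2 ≤ 1 := by nlinarith [hPb.1, hPb.2]
    have hsq : cd ^ 2 = cs ^ 2 * P ^ 2 := by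
      linear_combination (cd - cs * Real.cos (t / 2) * P) * hmain + cs ^ 2 * P ^ 2 * hcsq
    nlinarith [hsq, hP2]
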